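/- Let $F : \mathcal{K} \times R \to \mathbb{L}$ be $\mathbb{F}$-key-homomorphic ($\mathbb{F}$-linear in the key), $x_0, x_1, \ldots, x_t \in \mathbb{F}$ distinct, $p \in \mathcal{K}[X]$ of degree at most $t-1$, and $r \in R$. Then there exists a polynomial $\delta(X) \in \mathbb{L}[X]$ of degree at most $t-1$ such that $\delta(x_i) = F(p(x_i), r)$ for all $0 \le i \le t$. -/
import Mathlib


theorem keyhom_prf_values_interpolate
    (F K L R : Type*) [Field F] [Field K] [Algebra F K]
    [Field L] [Algebra F L]
    (Fn : K → R → L)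
    (hadd : ∀ (k₁ k₂ : K) (r : R), Fn (k₁ + k₂) r = Fn k₁ r + Fn k₂ r)
    (hsmul : ∀ (c : F) (k : K) (r : R), Fn (algebraMap F K c * k) r = algebraMap F L c * Fn k r)
    (t : ℕ) (ht : 1 ≤ t)
    (x : Fin (t + 1) → F) (hx : Function.Injective x)
    (p : Polynomial K) (hp : p.natDegree ≤ t - 1) (r : R) :
    ∃ δ : Polynomial L, δ.natDegree ≤ t - 1 ∧
      ∀ i : Fin (t + 1),
        δ.eval (algebraMap F L (x i)) = Fn (p.eval (algebraMap F K (x i))) r := by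
  have hzero : Fn 0 r = 0 := by
    have := hadd 0 0 r
    simp at this
    exact this
  set G : K →+ L :=
    { toFun := fun k => Fn k r
      map_zero' := hzero
      map_add' := fun a b => hadd a b r } with hG
  refine ⟨∑ j ∈ Finset.range t, Polynomial.C (Fn (p.coeff j) r) * Polynomial.X ^ j, ?_, ?_⟩
  · refine (Polynomial.natDegree_sum_le _ _).trans ?_
    simp only [Finset.fold_max_le]
    constructor
    · omega
    · intro j hj
      refine (Polynomial.natDegree_C_mul_le _ _).trans ?_
      simp only [Polynomial.natDegree_C, Polynomial.natDegree_X_pow]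
      simp at hj
      omega
  · intro i
    have hlt : p.natDegree < t := by omega
    rw [Polynomial.eval_eq_sum_range' hlt]
    have : Fn (∑ j ∈ Finset.range t, p.coeff j * algebraMap F K (x i) ^ j) r
        = ∑ j ∈ Finset.range t, Fn (p.coeff j * algebraMap F K (x i) ^ j) r :=
      map_sum G _ _
    rw [this, Polynomial.eval_finset_sum]
    refine Finset.sum_congr rfl fun j _ => ?_
    have h1 : p.coeff j * algebraMap F K (x i) ^ j
        = algebraMap F K ((x i) ^ j) * p.coeff j := by
      rw [map_pow]; ring
    rw [h1, hsmul, map_pow]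
    rw [Polynomial.eval_mul, Polynomial.eval_C, Polynomial.eval_pow, Polynomial.eval_X, mul_comm]
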